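/- Let X be a compact Hausdorff space, E a Banach space over 𝕂 ∈ {ℝ, ℂ}, and A a 𝕂-linear subspace of C(X,E). Then Θ(A) ⊆ τ(A), τ(A) ⊆ η₂(A) ∩ X₀, and η₂(A) ∩ X₀ ⊆ η₁(A). -/

import Mathlib

open Set Metric

variable {𝕂 : Type*} [RCLike 𝕂]
variable {X : Type*} [TopologicalSpace X] [CompactSpace X] [T2Space X]
variable {E : Type*} [NormedAddCommGroup E] [NormedSpace ℝ E] [NormedSpace 𝕂 E]
  [IsScalarTower ℝ 𝕂 E] [CompleteSpace E]

/-- `C` is a maximal convex subset of `S` (convexity over `ℝ`). -/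
def MaxConvexIn {M : Type*} [AddCommGroup M] [Module ℝ M] (S C : Set M) : Prop :=
  C ⊆ S ∧ Convex ℝ C ∧ ∀ C' : Set M, C' ⊆ S → Convex ℝ C' → C ⊆ C' → C' = C

/-- The unit sphere `S(A)` of the subspace `A` of `C(X,E)`. -/
def unitSphereOf (A : Subspace 𝕂 C(X, E)) : Set C(X, E) :=
  {f | f ∈ A ∧ ‖f‖ = 1}

/-- The set `V^A_{x,K} = {f ∈ S(A) : f(x) ∈ K}`. -/
def Vset (A : Subspace 𝕂 C(X, E)) (x : X) (K : Set E) : Set C(X, E) :=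
  {f | f ∈ A ∧ ‖f‖ = 1 ∧ f x ∈ K}

/-- The set `Θ(A)` of strong boundary points of a set `A` of functions in `C(X,E)`. -/
def strongBoundaryPoints (A : Set C(X, E)) : Set X :=
  {x | ∀ U ∈ nhds x, ∀ ε : ℝ, 0 < ε → ∀ u : E, ‖u‖ = 1 →
    ∃ f ∈ A, ‖f‖ = 1 ∧ f x = u ∧ ∀ y, y ∉ U → ‖f y‖ < ε}

/-- The set `τ(A)`: the strong boundary condition required only for `ε = 1`. -/
def tauPoints (A : Set C(X, E)) : Set X :=
  {x | ∀ U ∈ nhds x, ∀ u : E, ‖u‖ = 1 →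
    ∃ f ∈ A, ‖f‖ = 1 ∧ f x = u ∧ ∀ y, y ∉ U → ‖f y‖ < 1}

/-- `η₁(A)`: points of type one for `A`. -/
def typeOnePoints (A : Subspace 𝕂 C(X, E)) : Set X :=
  {x | ∀ K : Set E, MaxConvexIn (sphere (0 : E) 1) K →
    MaxConvexIn (unitSphereOf A) (Vset A x K)}

/-- `η₂(A)`: points of type two for `A`. -/
def typeTwoPoints (A : Subspace 𝕂 C(X, E)) : Set X :=
  {x | ∀ K K' : Set E, MaxConvexIn (sphere (0 : E) 1) K →
    MaxConvexIn (sphere (0 : E) 1) K' →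
    ∀ y : X, Vset A x K ⊆ Vset A y K' → x = y}

/-- `X₀ = {x ∈ X : S(E) ⊆ {f(x) : f ∈ S(A)}}`. -/
def X0set (A : Subspace 𝕂 C(X, E)) : Set X :=
  {x | sphere (0 : E) 1 ⊆ (fun f : C(X, E) => f x) '' unitSphereOf A}

/-- Any convex subset of a set extends to a maximal convex subset (Zorn). -/
lemma exists_maxConvexIn {M : Type*} [AddCommGroup M] [Module ℝ M] (S C : Set M)
    (hCS : C ⊆ S) (hC : Convex ℝ C) : ∃ K, C ⊆ K ∧ MaxConvexIn S K := by
  have hub : ∀ c ⊆ {D : Set M | D ⊆ S ∧ Convex ℝ D}, IsChain (· ⊆ ·) c → c.Nonempty →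
      ∃ ub ∈ {D : Set M | D ⊆ S ∧ Convex ℝ D}, ∀ s ∈ c, s ⊆ ub := by
    intro c hc hchain _
    refine ⟨⋃₀ c, ⟨sUnion_subset fun s hs => (hc hs).1, ?_⟩, fun s hs => subset_sUnion_of_mem hs⟩
    intro p hp q hq a b ha hb hab
    obtain ⟨s, hs, hps⟩ := mem_sUnion.1 hp
    obtain ⟨t, ht, hqt⟩ := mem_sUnion.1 hq
    rcases hchain.total hs ht with hst | hts
    · exact subset_sUnion_of_mem ht ((hc ht).2 (hst hps) hqt ha hb hab)
    · exact subset_sUnion_of_mem hs ((hc hs).2 hps (hts hqt) ha hb hab)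
  obtain ⟨m, hCm, hm⟩ := zorn_subset_nonempty {D : Set M | D ⊆ S ∧ Convex ℝ D} hub C ⟨hCS, hC⟩
  exact ⟨m, hCm, hm.prop.1, hm.prop.2, fun C' h1 h2 h3 => hm.eq_of_ge ⟨h1, h2⟩ h3⟩

lemma maxConvexIn_sphere_nonempty [Nontrivial E] {K : Set E}
    (h : MaxConvexIn (sphere (0 : E) 1) K) : K.Nonempty := by
  obtain ⟨u, hu⟩ := (NormedSpace.sphere_nonempty (x := (0 : E)) (r := 1)).2 zero_le_one
  by_contra hK
  rw [Set.not_nonempty_iff_eq_empty] at hK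
  have := h.2.2 {u} (singleton_subset_iff.2 hu) (convex_singleton u) (by simp [hK])
  simp [hK] at this

lemma vset_convex (A : Subspace 𝕂 C(X, E)) (x : X) {K : Set E}
    (hKS : K ⊆ sphere (0 : E) 1) (hKc : Convex ℝ K) : Convex ℝ (Vset A x K) := by
  intro f hf g hg a b ha hb hab
  have hmem : a • f + b • g ∈ A :=
    A.add_mem (A.smul_of_tower_mem a hf.1) (A.smul_of_tower_mem b hg.1)
  have hx : (a • f + b • g) x = a • f x + b • g x := by simp
  have hKx : a • f x + b • g x ∈ K := hKc hf.2.2 hg.2.2 ha hb hab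
  have h1 : ‖(a • f + b • g) x‖ = 1 := by
    rw [hx]; exact mem_sphere_zero_iff_norm.1 (hKS hKx)
  have hle : ‖a • f + b • g‖ ≤ 1 := by
    calc ‖a • f + b • g‖ ≤ ‖a • f‖ + ‖b • g‖ := norm_add_le _ _
    _ = a * ‖f‖ + b * ‖g‖ := by
        rw [norm_smul, norm_smul, Real.norm_of_nonneg ha, Real.norm_of_nonneg hb]
    _ = 1 := by rw [hf.2.1, hg.2.1, mul_one, mul_one]; exact hab
  have hge : 1 ≤ ‖a • f + b • g‖ := h1 ▸ ContinuousMap.norm_coe_le_norm _ x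
  exact ⟨hmem, le_antisymm hle hge, hx ▸ hKx⟩

/-- `Θ(A) ⊆ τ(A)`, `τ(A) ⊆ η₂(A) ∩ X₀` and `η₂(A) ∩ X₀ ⊆ η₁(A)`. -/
theorem stmt2 [Nontrivial E] (A : Subspace 𝕂 C(X, E)) :
    strongBoundaryPoints (A : Set C(X, E)) ⊆ tauPoints (A : Set C(X, E)) ∧
    tauPoints (A : Set C(X, E)) ⊆ typeTwoPoints A ∩ X0set A ∧
    typeTwoPoints A ∩ X0set A ⊆ typeOnePoints A := by
  refine ⟨fun x hx U hU u hu => hx U hU 1 one_pos u hu, fun x hx => ⟨?_, ?_⟩, ?_⟩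
  · -- τ ⊆ η₂
    intro K K' hK hK' y hsub
    by_contra hxy
    obtain ⟨u, huK⟩ := maxConvexIn_sphere_nonempty hK
    have hu : ‖u‖ = 1 := mem_sphere_zero_iff_norm.1 (hK.1 huK)
    have hUy : ({y}ᶜ : Set X) ∈ nhds x :=
      (isOpen_compl_singleton).mem_nhds (by simpa using hxy)
    obtain ⟨f, hfA, hf1, hfx, hfsmall⟩ := hx ({y}ᶜ) hUy u hu
    have hfV : f ∈ Vset A x K := ⟨hfA, hf1, hfx ▸ huK⟩
    have : ‖f y‖ = 1 := mem_sphere_zero_iff_norm.1 (hK'.1 (hsub hfV).2.2)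
    have := hfsmall y (by simp)
    linarith
  · -- τ ⊆ X₀
    intro u hu
    obtain ⟨f, hfA, hf1, hfx, -⟩ := hx univ Filter.univ_mem u (mem_sphere_zero_iff_norm.1 hu)
    exact ⟨f, ⟨hfA, hf1⟩, hfx⟩
  · -- η₂ ∩ X₀ ⊆ η₁
    rintro x ⟨hx2, hx0⟩ K hK
    refine ⟨fun f hf => ⟨hf.1, hf.2.1⟩, vset_convex A x hK.1 hK.2.1, ?_⟩
    intro C' hC'S hC'c hVC'
    refine Set.Subset.antisymm ?_ hVC'
    have hbound : ∀ g ∈ C', ∀ y : X, ‖g y‖ ≤ 1 := fun g hg y =>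
      (hC'S hg).2 ▸ ContinuousMap.norm_coe_le_norm g y
    by_cases hcase : ∀ g ∈ C', ‖g x‖ = 1
    · -- the image of C' at x is a convex subset of the sphere containing K
      set D := (fun f : C(X, E) => f x) '' C' with hD
      have hDS : D ⊆ sphere (0 : E) 1 := by
        rintro _ ⟨g, hg, rfl⟩; exact mem_sphere_zero_iff_norm.2 (hcase g hg)
      have hDc : Convex ℝ D := by
        rintro _ ⟨g, hg, rfl⟩ _ ⟨g', hg', rfl⟩ a b ha hb hab
        exact ⟨a • g + b • g', hC'c hg hg' ha hb hab, by simp⟩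
      have hKD : K ⊆ D := by
        intro u huK
        obtain ⟨f, hfS, hfx⟩ := hx0 (hK.1 huK)
        exact ⟨f, hVC' ⟨hfS.1, hfS.2, (show f x = u from hfx).symm ▸ huK⟩, hfx⟩
      have hDK : D = K := hK.2.2 D hDS hDc hKD
      intro g hg
      exact ⟨(hC'S hg).1, (hC'S hg).2, hDK ▸ ⟨g, hg, rfl⟩⟩
    · exfalso
      push_neg at hcase
      obtain ⟨h, hhC', hhx⟩ := hcase
      have hhxlt : ‖h x‖ < 1 := lt_of_le_of_ne (hbound h hhC' x) hhx
      haveI : Nonempty X := ⟨x⟩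
      classical
      -- finite subsets of C' containing h
      set ι := {t : Finset C(X, E) // ↑t ⊆ C' ∧ h ∈ t} with hι
      haveI : Nonempty ι := ⟨⟨{h}, by simpa using hhC', Finset.mem_singleton_self h⟩⟩
      set Z : ι → Set X := fun t => {y | (t.1.card : ℝ) ≤ ‖(∑ f ∈ t.1, f) y‖} with hZ
      have hmono : ∀ (s t : Finset C(X, E)), ↑t ⊆ C' → s ⊆ t → ∀ y : X,
          (t.card : ℝ) ≤ ‖(∑ f ∈ t, f) y‖ → (s.card : ℝ) ≤ ‖(∑ f ∈ s, f) y‖ := by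
        intro s t htC' hst y hy
        have hsplit : (∑ f ∈ t \ s, f) + (∑ f ∈ s, f) = ∑ f ∈ t, f :=
          Finset.sum_sdiff hst
        have h1 : ‖(∑ f ∈ t \ s, f) y‖ ≤ ((t \ s).card : ℝ) := by
          rw [ContinuousMap.sum_apply]
          calc ‖∑ f ∈ t \ s, f y‖ ≤ ∑ f ∈ t \ s, ‖f y‖ := norm_sum_le _ _
          _ ≤ ∑ _f ∈ t \ s, (1 : ℝ) := Finset.sum_le_sum fun f hf =>
              hbound f (htC' (Finset.mem_sdiff.1 hf).1) y
          _ = ((t \ s).card : ℝ) := by simp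
        have h2 : ‖(∑ f ∈ t, f) y‖ ≤ ‖(∑ f ∈ t \ s, f) y‖ + ‖(∑ f ∈ s, f) y‖ := by
          rw [← hsplit]; exact norm_add_le _ _
        have h3 : ((t \ s).card : ℝ) + (s.card : ℝ) = (t.card : ℝ) := by
          exact_mod_cast congrArg (Nat.cast (R := ℝ)) (Finset.card_sdiff_add_card_eq_card hst)
        linarith
      have hZne : ∀ t : ι, (Z t).Nonempty := by
        rintro ⟨t, htC', hht⟩
        have hcard : 0 < t.card := Finset.card_pos.2 ⟨h, hht⟩
        have hmem : (t.card : ℝ)⁻¹ • (∑ f ∈ t, f) ∈ C' := by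
          rw [Finset.smul_sum]
          exact hC'c.sum_mem (fun i _ => by positivity)
            (by simp only [Finset.sum_const, nsmul_eq_mul]; exact mul_inv_cancel₀ (Nat.cast_ne_zero.2 hcard.ne')) (fun i hi => htC' hi)
        have hnorm : ‖(t.card : ℝ)⁻¹ • (∑ f ∈ t, f)‖ = 1 := (hC'S hmem).2
        have hsum : ‖(∑ f ∈ t, f)‖ = (t.card : ℝ) := by
          rw [norm_smul, Real.norm_eq_abs, abs_of_pos (by positivity)] at hnorm
          field_simp at hnorm
          linarith
        obtain ⟨y, -, hy⟩ := isCompact_univ.exists_isMaxOn univ_nonempty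
          (((∑ f ∈ t, f).continuous.norm).continuousOn)
        refine ⟨y, ?_⟩
        have : ‖(∑ f ∈ t, f)‖ ≤ ‖(∑ f ∈ t, f) y‖ :=
          (ContinuousMap.norm_le _ (norm_nonneg _)).2 fun z => hy (mem_univ z)
        simp only [hZ, mem_setOf_eq]
        linarith [hsum ▸ this]
      have hZcl : ∀ t : ι, IsClosed (Z t) := fun t =>
        isClosed_le continuous_const ((∑ f ∈ t.1, f).continuous.norm)
      have hZdir : Directed (· ⊇ ·) Z := by
        intro t₁ t₂
        refine ⟨⟨t₁.1 ∪ t₂.1, ?_, Finset.mem_union_left _ t₁.2.2⟩, ?_, ?_⟩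
        · intro f hf
          rcases Finset.mem_union.1 hf with hf | hf
          · exact t₁.2.1 hf
          · exact t₂.2.1 hf
        · exact fun y hy => hmono t₁.1 _ (by
            intro f hf
            rcases Finset.mem_union.1 hf with hf | hf
            · exact t₁.2.1 hf
            · exact t₂.2.1 hf) Finset.subset_union_left y hy
        · exact fun y hy => hmono t₂.1 _ (by
            intro f hf
            rcases Finset.mem_union.1 hf with hf | hf
            · exact t₁.2.1 hf
            · exact t₂.2.1 hf) Finset.subset_union_right y hy
      obtain ⟨y, hy⟩ := IsCompact.nonempty_iInter_of_directed_nonempty_isCompact_isClosed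
        Z hZdir hZne (fun t => (hZcl t).isCompact) hZcl
      have hy' : ∀ t : ι, y ∈ Z t := fun t => mem_iInter.1 hy t
      have hnorm1 : ∀ g ∈ C', ‖g y‖ = 1 := by
        intro g hg
        by_cases hgh : g = h
        · have := hy' ⟨{h}, by simpa using hhC', Finset.mem_singleton_self h⟩
          simp only [hZ, mem_setOf_eq, Finset.card_singleton, Finset.sum_singleton] at this
          exact le_antisymm (hbound g hg y) (by rw [hgh]; exact_mod_cast this)
        · have hsubC' : (↑({g, h} : Finset C(X, E)) : Set C(X, E)) ⊆ C' := by
            intro f hf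
            simp only [Finset.coe_insert, Finset.coe_singleton, mem_insert_iff,
              mem_singleton_iff] at hf
            rcases hf with rfl | rfl
            · exact hg
            · exact hhC'
          have := hy' ⟨{g, h}, hsubC', Finset.mem_insert_of_mem (Finset.mem_singleton_self h)⟩
          have h1 := hmono {g} {g, h} hsubC' (by
            intro f hf
            rw [Finset.mem_singleton.1 hf]
            exact Finset.mem_insert_self g _) y this
          simp only [Finset.card_singleton, Finset.sum_singleton] at h1
          exact le_antisymm (hbound g hg y) (by exact_mod_cast h1)
      have hxy : x ≠ y := by
        intro e
        rw [e] at hhxlt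
        rw [hnorm1 h hhC'] at hhxlt
        exact lt_irrefl _ hhxlt
      -- the image of C' at y is a convex subset of the sphere; extend to maximal K'
      have hDyS : (fun f : C(X, E) => f y) '' C' ⊆ sphere (0 : E) 1 := by
        rintro _ ⟨g, hg, rfl⟩; exact mem_sphere_zero_iff_norm.2 (hnorm1 g hg)
      have hDyc : Convex ℝ ((fun f : C(X, E) => f y) '' C') := by
        rintro _ ⟨g, hg, rfl⟩ _ ⟨g', hg', rfl⟩ a b ha hb hab
        exact ⟨a • g + b • g', hC'c hg hg' ha hb hab, by simp⟩
      obtain ⟨K', hDK', hK'⟩ := exists_maxConvexIn (sphere (0 : E) 1) _ hDyS hDyc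
      have hsub : Vset A x K ⊆ Vset A y K' := fun f hf =>
        ⟨hf.1, hf.2.1, hDK' ⟨f, hVC' hf, rfl⟩⟩
      exact hxy (hx2 K K' hK hK' y hsub)
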